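/- arXiv:1311.5196 — 5 statements merged into one kernel-verified Lean document; each statement's English description precedes it below -/
import Mathlib

section
/- If ρ, u are C¹ solutions of the system ρ_t + (ρu)_x = 0 and u_t + u u_x + c²ρ⁻³ρ_x = c c' ρ⁻², with ρ > 0 and c = c(x) a C¹ positive function, then S = u + c/ρ satisfies S_t + R S_x = (c'/(4c))(S² − R²), where R = u − c/ρ. -/
/-- For C¹ solutions of the inhomogeneous Chaplygin system with ρ > 0,
the Riemann variable S = u + c/ρ satisfies
S_t + R S_x = (c'/(4c))(S² − R²), where R = u − c/ρ. -/
theorem stmt2 (T : ℝ) (hT : 0 < T)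
    (c c' : ℝ → ℝ) (hc : ∀ x, HasDerivAt c (c' x) x) (hcpos : ∀ x, 0 < c x)
    (ρ u ρx ρt ux ut Sx St : ℝ → ℝ → ℝ)
    (hρpos : ∀ x t, 0 < ρ x t)
    (hρx : ∀ x t, HasDerivAt (fun y => ρ y t) (ρx x t) x)
    (hρt : ∀ x t, HasDerivAt (fun s => ρ x s) (ρt x t) t)
    (hux : ∀ x t, HasDerivAt (fun y => u y t) (ux x t) x)
    (hut : ∀ x t, HasDerivAt (fun s => u x s) (ut x t) t)
    (hmass : ∀ x t, t ∈ Set.Ico 0 T →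
      ρt x t + u x t * ρx x t + ρ x t * ux x t = 0)
    (hmom : ∀ x t, t ∈ Set.Ico 0 T →
      ut x t + u x t * ux x t + (c x) ^ 2 * (ρ x t)⁻¹ ^ 3 * ρx x t
        = c x * c' x * (ρ x t)⁻¹ ^ 2)
    (hSx : ∀ x t, HasDerivAt (fun y => u y t + c y / ρ y t) (Sx x t) x)
    (hSt : ∀ x t, HasDerivAt (fun s => u x s + c x / ρ x s) (St x t) t) :
    ∀ x t, t ∈ Set.Ico 0 T →
      St x t + (u x t - c x / ρ x t) * Sx x t
        = c' x / (4 * c x) *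
          ((u x t + c x / ρ x t) ^ 2 - (u x t - c x / ρ x t) ^ 2) := by
  intro x t ht
  have hρne : ρ x t ≠ 0 := (hρpos x t).ne'
  have hcne : c x ≠ 0 := (hcpos x).ne'
  have hSx' : HasDerivAt (fun y => u y t + c y / ρ y t)
      (ux x t + (c' x * ρ x t - c x * ρx x t) / (ρ x t) ^ 2) x :=
    (hux x t).add (((hc x).div (hρx x t) hρne))
  have hSt' : HasDerivAt (fun s => u x s + c x / ρ x s)
      (ut x t + (0 * ρ x t - c x * ρt x t) / (ρ x t) ^ 2) t :=
    (hut x t).add (((hasDerivAt_const t (c x)).div (hρt x t) hρne))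
  have eSx : Sx x t = ux x t + (c' x * ρ x t - c x * ρx x t) / (ρ x t) ^ 2 :=
    (hSx x t).unique hSx'
  have eSt : St x t = ut x t + (0 * ρ x t - c x * ρt x t) / (ρ x t) ^ 2 :=
    (hSt x t).unique hSt'
  have hm := hmass x t ht
  have hp := hmom x t ht
  have hut' : ut x t = c x * c' x * (ρ x t)⁻¹ ^ 2 - u x t * ux x t
      - (c x) ^ 2 * (ρ x t)⁻¹ ^ 3 * ρx x t := by linarith
  have hρt' : ρt x t = -(u x t * ρx x t) - ρ x t * ux x t := by linarith
  rw [eSx, eSt, hut', hρt']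
  field_simp
  ring
end

section
/- If ρ, u are C¹ solutions of the system ρ_t + (ρu)_x = 0 and u_t + u u_x + c²ρ⁻³ρ_x = c c' ρ⁻², with ρ > 0 and c = c(x) a C¹ positive function, then R = u − c/ρ satisfies R_t + S R_x = (c'/(4c))(R² − S²), where S = u + c/ρ. -/
/-- For C¹ solutions of the inhomogeneous Chaplygin system with ρ > 0,
the Riemann variable R = u − c/ρ satisfies
R_t + S R_x = (c'/(4c))(R² − S²), where S = u + c/ρ. -/
theorem stmt3 (T : ℝ) (hT : 0 < T)
    (c c' : ℝ → ℝ) (hc : ∀ x, HasDerivAt c (c' x) x) (hcpos : ∀ x, 0 < c x)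
    (ρ u ρx ρt ux ut Rx Rt : ℝ → ℝ → ℝ)
    (hρpos : ∀ x t, 0 < ρ x t)
    (hρx : ∀ x t, HasDerivAt (fun y => ρ y t) (ρx x t) x)
    (hρt : ∀ x t, HasDerivAt (fun s => ρ x s) (ρt x t) t)
    (hux : ∀ x t, HasDerivAt (fun y => u y t) (ux x t) x)
    (hut : ∀ x t, HasDerivAt (fun s => u x s) (ut x t) t)
    (hmass : ∀ x t, t ∈ Set.Ico 0 T →
      ρt x t + u x t * ρx x t + ρ x t * ux x t = 0)
    (hmom : ∀ x t, t ∈ Set.Ico 0 T →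
      ut x t + u x t * ux x t + (c x) ^ 2 * (ρ x t)⁻¹ ^ 3 * ρx x t
        = c x * c' x * (ρ x t)⁻¹ ^ 2)
    (hRx : ∀ x t, HasDerivAt (fun y => u y t - c y / ρ y t) (Rx x t) x)
    (hRt : ∀ x t, HasDerivAt (fun s => u x s - c x / ρ x s) (Rt x t) t) :
    ∀ x t, t ∈ Set.Ico 0 T →
      Rt x t + (u x t + c x / ρ x t) * Rx x t
        = c' x / (4 * c x) *
          ((u x t - c x / ρ x t) ^ 2 - (u x t + c x / ρ x t) ^ 2) := by
  intro x t ht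
  have hρne : ρ x t ≠ 0 := (hρpos x t).ne'
  have hcne : c x ≠ 0 := (hcpos x).ne'
  have hRx' : HasDerivAt (fun y => u y t - c y / ρ y t)
      (ux x t - (c' x * ρ x t - c x * ρx x t) / (ρ x t) ^ 2) x :=
    (hux x t).sub ((hc x).div (hρx x t) hρne)
  have hRt' : HasDerivAt (fun s => u x s - c x / ρ x s)
      (ut x t - (0 * ρ x t - c x * ρt x t) / (ρ x t) ^ 2) t :=
    (hut x t).sub ((hasDerivAt_const t (c x)).div (hρt x t) hρne)
  have ex : Rx x t = ux x t - (c' x * ρ x t - c x * ρx x t) / (ρ x t) ^ 2 :=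
    (hRx x t).unique hRx'
  have et : Rt x t = ut x t - (0 * ρ x t - c x * ρt x t) / (ρ x t) ^ 2 :=
    (hRt x t).unique hRt'
  have hm := hmass x t ht
  have hp := hmom x t ht
  rw [ex, et]
  field_simp at hp ⊢
  linear_combination (4 * c x) * hp + (4 * (c x)^2 * ρ x t) * hm
end

section
/- For C¹ solutions of the inhomogeneous Chaplygin system with ρ > 0, the quantity ρ(S² + R²) satisfies the conservation law (ρ(S² + R²))_t + (ρ(S²R + R²S))_x = 0, where S = u + c/ρ and R = u − c/ρ. -/
/-- For C¹ solutions with ρ > 0, the quantity ρ(S²+R²) satisfies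
(ρ(S²+R²))_t + (ρ(S²R+R²S))_x = 0, where S = u + c/ρ, R = u − c/ρ. -/
theorem stmt4 (T : ℝ) (hT : 0 < T)
    (c c' : ℝ → ℝ) (hc : ∀ x, HasDerivAt c (c' x) x) (hcpos : ∀ x, 0 < c x)
    (ρ u S R ρx ρt ux Sx St Rx Rt Et qx : ℝ → ℝ → ℝ)
    (hρpos : ∀ x t, 0 < ρ x t)
    (hS : ∀ x t, S x t = u x t + c x / ρ x t)
    (hR : ∀ x t, R x t = u x t - c x / ρ x t)
    (hρx : ∀ x t, HasDerivAt (fun y => ρ y t) (ρx x t) x)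
    (hρt : ∀ x t, HasDerivAt (fun s => ρ x s) (ρt x t) t)
    (hux : ∀ x t, HasDerivAt (fun y => u y t) (ux x t) x)
    (hSx : ∀ x t, HasDerivAt (fun y => S y t) (Sx x t) x)
    (hSt : ∀ x t, HasDerivAt (fun s => S x s) (St x t) t)
    (hRx : ∀ x t, HasDerivAt (fun y => R y t) (Rx x t) x)
    (hRt : ∀ x t, HasDerivAt (fun s => R x s) (Rt x t) t)
    (hmass : ∀ x t, t ∈ Set.Ico 0 T →
      ρt x t + u x t * ρx x t + ρ x t * ux x t = 0)
    (hSeq : ∀ x t, t ∈ Set.Ico 0 T →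
      St x t + R x t * Sx x t
        = c' x / (4 * c x) * (S x t ^ 2 - R x t ^ 2))
    (hReq : ∀ x t, t ∈ Set.Ico 0 T →
      Rt x t + S x t * Rx x t
        = c' x / (4 * c x) * (R x t ^ 2 - S x t ^ 2))
    (hEt : ∀ x t, HasDerivAt
      (fun s => ρ x s * (S x s ^ 2 + R x s ^ 2)) (Et x t) t)
    (hqx : ∀ x t, HasDerivAt
      (fun y => ρ y t * (S y t ^ 2 * R y t + R y t ^ 2 * S y t)) (qx x t) x) :
    ∀ x t, t ∈ Set.Ico 0 T → Et x t + qx x t = 0 := by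
  intro x t ht
  have hρne : ρ x t ≠ 0 := (hρpos x t).ne'
  have hcne : c x ≠ 0 := (hcpos x).ne'
  -- value of Et
  have hEt' : Et x t = ρt x t * (S x t ^ 2 + R x t ^ 2)
      + ρ x t * (2 * S x t * St x t + 2 * R x t * Rt x t) := by
    have h := (hρt x t).mul (((hSt x t).pow 2).add ((hRt x t).pow 2))
    have h2 := (hEt x t).unique h
    rw [h2]; simp only [Pi.pow_apply, Pi.mul_apply, Pi.add_apply]; push_cast; ring
  -- value of qx
  have hqx' : qx x t = ρx x t * (S x t ^ 2 * R x t + R x t ^ 2 * S x t)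
      + ρ x t * ((2 * S x t * Sx x t * R x t + S x t ^ 2 * Rx x t)
        + (2 * R x t * Rx x t * S x t + R x t ^ 2 * Sx x t)) := by
    have h := (hρx x t).mul ((((hSx x t).pow 2).mul (hRx x t)).add
      (((hRx x t).pow 2).mul (hSx x t)))
    have h2 := (hqx x t).unique h
    rw [h2]; simp only [Pi.pow_apply, Pi.mul_apply, Pi.add_apply]; push_cast; ring
  -- S - R = 2c/ρ pointwise relations
  have hcv : c x = ρ x t * (S x t - R x t) / 2 := by
    have h : S x t - R x t = 2 * (c x / ρ x t) := by rw [hS, hR]; ring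
    field_simp at h
    linarith
  have huv : u x t = (S x t + R x t) / 2 := by
    have h1 := hS x t; have h2 := hR x t; linarith
  -- x-derivative relations
  have keyx : Sx x t - Rx x t
      = 2 * ((c' x * ρ x t - c x * ρx x t) / ρ x t ^ 2) := by
    have hd1 : HasDerivAt (fun y => S y t - R y t) (Sx x t - Rx x t) x :=
      (hSx x t).sub (hRx x t)
    have hfe : (fun y => S y t - R y t) = fun y => 2 * (c y / ρ y t) := by
      funext y; rw [hS, hR]; ring
    have hd2 : HasDerivAt (fun y => 2 * (c y / ρ y t))
        (2 * ((c' x * ρ x t - c x * ρx x t) / ρ x t ^ 2)) x :=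
      ((hc x).div (hρx x t) hρne).const_mul 2
    rw [hfe] at hd1
    have := hd1.unique hd2
    linarith
  have huxv : ux x t = (Sx x t + Rx x t) / 2 := by
    have hd1 : HasDerivAt (fun y => S y t + R y t) (Sx x t + Rx x t) x :=
      (hSx x t).add (hRx x t)
    have hfe : (fun y => S y t + R y t) = fun y => 2 * u y t := by
      funext y; rw [hS, hR]; ring
    have hd2 : HasDerivAt (fun y => 2 * u y t) (2 * ux x t) x :=
      (hux x t).const_mul 2
    rw [hfe] at hd1
    have := hd1.unique hd2
    linarith
  have hρxv : ρx x t
      = (c' x * ρ x t - (Sx x t - Rx x t) * ρ x t ^ 2 / 2) / c x := by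
    field_simp at keyx ⊢
    linarith
  have hρtv : ρt x t = -(u x t * ρx x t + ρ x t * ux x t) := by
    have := hmass x t ht; linarith
  have hStv : St x t = -(R x t * Sx x t)
      + c' x / (4 * c x) * (S x t ^ 2 - R x t ^ 2) := by
    have := hSeq x t ht; linarith
  have hRtv : Rt x t = -(S x t * Rx x t)
      + c' x / (4 * c x) * (R x t ^ 2 - S x t ^ 2) := by
    have := hReq x t ht; linarith
  have hSR : S x t - R x t ≠ 0 := by
    have h : S x t - R x t = 2 * (c x / ρ x t) := by rw [hS, hR]; ring
    have := hcpos x; have := hρpos x t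
    rw [h]; positivity
  rw [hEt', hqx', hStv, hRtv, hρtv, hρxv, huxv, huv, hcv]
  field_simp
  ring
end

section
/- Fix 0 < ε < 1 and α ∈ [0,1). With c(x) = 3 + ε^α x on [−1,1] and initial data ρ₀(x) = 1, u₀(x) = c(x) − ε^{α+1} on [−ε, ε], the initial energy satisfies ∫_{−1}^{1} ρ₀⁻¹((c − ρ₀ ε^{α+1})² + c²) dx ≤ K ε for ρ₀ as in the duct-flow construction, for some constant K independent of ε, where ρ₀ = ε^{−α−1} outside [−2ε, 2ε], ρ₀ = 1 on [−ε,ε], and ρ₀ between 1 and ε^{−α−1} on the transition intervals. -/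
set_option maxHeartbeats 1000000

open MeasureTheory

/-- With c(x) = 3 + ε^α x on [−1,1] and the duct-flow initial density ρ₀
(equal to ε^{−α−1} outside [−2ε,2ε], equal to 1 on [−ε,ε], and between 1
and ε^{−α−1} on the transition intervals), the initial energy satisfies
∫_{−1}^{1} ρ₀⁻¹((c − ρ₀ε^{α+1})² + c²) dx ≤ Kε for an absolute constant K. -/
theorem stmt15 :
    ∃ K : ℝ, 0 < K ∧ ∀ (ε α : ℝ), 0 < ε → ε < 1 → 0 ≤ α → α < 1 →
      ∀ ρ₀ : ℝ → ℝ, Measurable ρ₀ →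
      (∀ x ∈ Set.Ico (-1 : ℝ) (-(2 * ε)), ρ₀ x = ε ^ (-(α + 1))) →
      (∀ x ∈ Set.Ioc (2 * ε) (1 : ℝ), ρ₀ x = ε ^ (-(α + 1))) →
      (∀ x ∈ Set.Icc (-ε) ε, ρ₀ x = 1) →
      (∀ x ∈ Set.Ico (-(2 * ε)) (-ε), 1 ≤ ρ₀ x ∧ ρ₀ x ≤ ε ^ (-(α + 1))) →
      (∀ x ∈ Set.Ioc ε (2 * ε), 1 ≤ ρ₀ x ∧ ρ₀ x ≤ ε ^ (-(α + 1))) →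
      (∫ x in (-1 : ℝ)..1, (ρ₀ x)⁻¹ *
          ((3 + ε ^ α * x - ρ₀ x * ε ^ (α + 1)) ^ 2 + (3 + ε ^ α * x) ^ 2))
        ≤ K * ε := by
  refine ⟨200, by norm_num, ?_⟩
  intro ε α hε hε1 hα hα1 ρ₀ hmeas h1 h2 h3 h4 h5
  have hε0 : (0:ℝ) ≤ ε := hε.le
  have hpow_pos : (0:ℝ) < ε ^ (α + 1) := Real.rpow_pos_of_pos hε _
  have hpowα : ε ^ α ≤ 1 := Real.rpow_le_one hε0 hε1.le hα
  have hpowα0 : (0:ℝ) < ε ^ α := Real.rpow_pos_of_pos hε _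
  have hpow_eq : ε ^ (α + 1) = ε ^ α * ε := by
    rw [Real.rpow_add hε, Real.rpow_one]
  have hpow_le : ε ^ (α + 1) ≤ ε := by
    rw [hpow_eq]; nlinarith
  have hpow_le1 : ε ^ (α + 1) ≤ 1 := hpow_le.trans hε1.le
  have hneg_eq : ε ^ (-(α + 1)) = (ε ^ (α + 1))⁻¹ := Real.rpow_neg hε0 _
  have hneg_mul : ε ^ (-(α + 1)) * ε ^ (α + 1) = 1 := by
    rw [hneg_eq]; field_simp
  have hneg_ge1 : (1:ℝ) ≤ ε ^ (-(α + 1)) := by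
    rw [hneg_eq]; exact (one_le_inv₀ hpow_pos).mpr hpow_le1
  set f : ℝ → ℝ := fun x => (ρ₀ x)⁻¹ *
      ((3 + ε ^ α * x - ρ₀ x * ε ^ (α + 1)) ^ 2 + (3 + ε ^ α * x) ^ 2) with hf
  -- uniform bounds on ρ₀ over (-1,1]
  have hρ : ∀ x ∈ Set.Ioc (-1:ℝ) 1, 1 ≤ ρ₀ x ∧ ρ₀ x * ε ^ (α + 1) ≤ 1 := by
    intro x hx
    obtain ⟨hx1, hx2⟩ := hx
    rcases lt_or_ge x (-(2*ε)) with h | h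
    · rw [h1 x ⟨hx1.le, h⟩]
      exact ⟨hneg_ge1, le_of_eq hneg_mul⟩
    rcases lt_or_ge x (-ε) with h' | h'
    · obtain ⟨ha, hb⟩ := h4 x ⟨h, h'⟩
      refine ⟨ha, ?_⟩
      calc ρ₀ x * ε ^ (α + 1) ≤ ε ^ (-(α + 1)) * ε ^ (α + 1) := by
            exact mul_le_mul_of_nonneg_right hb hpow_pos.le
        _ = 1 := hneg_mul
    rcases le_or_gt x ε with h'' | h''
    · rw [h3 x ⟨h', h''⟩]; exact ⟨le_refl 1, by simpa using hpow_le1⟩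
    rcases le_or_gt x (2*ε) with h''' | h'''
    · obtain ⟨ha, hb⟩ := h5 x ⟨h'', h'''⟩
      refine ⟨ha, ?_⟩
      calc ρ₀ x * ε ^ (α + 1) ≤ ε ^ (-(α + 1)) * ε ^ (α + 1) :=
            mul_le_mul_of_nonneg_right hb hpow_pos.le
        _ = 1 := hneg_mul
    · rw [h2 x ⟨h''', hx2⟩]
      exact ⟨hneg_ge1, le_of_eq hneg_mul⟩
  -- pointwise bound by g
  set g : ℝ → ℝ := fun x => 32*ε +
      Set.indicator (Set.Icc (-(2*ε)) (2*ε)) (fun _ => (32:ℝ)) x with hg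
  have hbound : ∀ x ∈ Set.Ioc (-1:ℝ) 1, f x ≤ g x := by
    intro x hx
    obtain ⟨hρ1, hρ2⟩ := hρ x hx
    have hρpos : (0:ℝ) < ρ₀ x := lt_of_lt_of_le one_pos hρ1
    have hc1 : 2 ≤ 3 + ε ^ α * x := by nlinarith [hx.1, hx.2, abs_le.mpr ⟨hx.1.le, hx.2⟩]
    have hc2 : 3 + ε ^ α * x ≤ 4 := by nlinarith [hx.1, hx.2]
    have hp0 : 0 ≤ ρ₀ x * ε ^ (α + 1) := by positivity
    have hbr : (3 + ε ^ α * x - ρ₀ x * ε ^ (α + 1)) ^ 2 + (3 + ε ^ α * x) ^ 2 ≤ 32 := by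
      nlinarith
    have hbr0 : 0 ≤ (3 + ε ^ α * x - ρ₀ x * ε ^ (α + 1)) ^ 2 + (3 + ε ^ α * x) ^ 2 := by
      positivity
    have hfle : f x ≤ (ρ₀ x)⁻¹ * 32 :=
      mul_le_mul_of_nonneg_left hbr (by positivity)
    by_cases hmem : x ∈ Set.Icc (-(2*ε)) (2*ε)
    · have : (ρ₀ x)⁻¹ ≤ 1 := inv_le_one_of_one_le₀ hρ1
      have : f x ≤ 32 := le_trans hfle (by nlinarith)
      simp only [hg, Set.indicator_of_mem hmem]
      nlinarith
    · have hout : ρ₀ x = ε ^ (-(α + 1)) := by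
        rw [Set.mem_Icc] at hmem
        push_neg at hmem
        rcases lt_or_ge x (-(2*ε)) with h | h
        · exact h1 x ⟨hx.1.le, h⟩
        · exact h2 x ⟨hmem h, hx.2⟩
      have hinv : (ρ₀ x)⁻¹ = ε ^ (α + 1) := by
        rw [hout, hneg_eq, inv_inv]
      have : f x ≤ ε ^ (α + 1) * 32 := by rw [← hinv]; exact hfle
      simp only [hg, Set.indicator_of_notMem hmem]
      nlinarith
  have hf0 : ∀ x ∈ Set.Ioc (-1:ℝ) 1, 0 ≤ f x := by
    intro x hx
    have hρ1 := (hρ x hx).1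
    have : (0:ℝ) < ρ₀ x := lt_of_lt_of_le one_pos hρ1
    positivity
  have hIoc : MeasurableSet (Set.Ioc (-1:ℝ) 1) := measurableSet_Ioc
  have hfmeas : Measurable f := by
    apply Measurable.mul (hmeas.inv)
    apply Measurable.add
    · exact ((((measurable_const.mul measurable_id).const_add 3).sub
        (hmeas.mul measurable_const)).pow measurable_const)
    · exact ((measurable_const.mul measurable_id).const_add 3).pow measurable_const
  have hfint : IntegrableOn f (Set.Ioc (-1:ℝ) 1) := by
    apply Integrable.mono' (g := fun _ => (32:ℝ)) ((integrableOn_const_iff).mpr (Or.inr (by simp)))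
      hfmeas.aestronglyMeasurable.restrict
    rw [ae_restrict_iff' hIoc]
    filter_upwards with x hx
    rw [Real.norm_eq_abs, abs_of_nonneg (hf0 x hx)]
    obtain ⟨hρ1, hρ2⟩ := hρ x hx
    have hρpos : (0:ℝ) < ρ₀ x := lt_of_lt_of_le one_pos hρ1
    have hc1 : 2 ≤ 3 + ε ^ α * x := by nlinarith [hx.1, hx.2]
    have hc2 : 3 + ε ^ α * x ≤ 4 := by nlinarith [hx.1, hx.2]
    have hp0 : 0 ≤ ρ₀ x * ε ^ (α + 1) := by positivity
    have hinv1 : (ρ₀ x)⁻¹ ≤ 1 := inv_le_one_of_one_le₀ hρ1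
    have : f x ≤ (ρ₀ x)⁻¹ * 32 :=
      mul_le_mul_of_nonneg_left (by nlinarith) (by positivity)
    nlinarith
  have hindint : IntegrableOn
      (Set.indicator (Set.Icc (-(2*ε)) (2*ε)) (fun _ => (32:ℝ))) (Set.Ioc (-1:ℝ) 1) := by
    have : Integrable (Set.indicator (Set.Icc (-(2*ε)) (2*ε)) (fun _ => (32:ℝ))) := by
      rw [integrable_indicator_iff measurableSet_Icc]
      exact (integrableOn_const_iff).mpr (Or.inr (by rw [Real.volume_Icc]; exact ENNReal.ofReal_lt_top))
    exact this.integrableOn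
  have hgint : IntegrableOn g (Set.Ioc (-1:ℝ) 1) :=
    Integrable.add ((integrableOn_const_iff).mpr (Or.inr (by simp))) hindint
  have hint_eq : (∫ x in (-1:ℝ)..1, f x) = ∫ x in Set.Ioc (-1:ℝ) 1, f x :=
    intervalIntegral.integral_of_le (by norm_num)
  rw [hint_eq]
  have hmono : ∫ x in Set.Ioc (-1:ℝ) 1, f x ≤ ∫ x in Set.Ioc (-1:ℝ) 1, g x :=
    setIntegral_mono_on hfint hgint hIoc hbound
  refine hmono.trans ?_
  have hsplit : ∫ x in Set.Ioc (-1:ℝ) 1, g x =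
      (∫ _x in Set.Ioc (-1:ℝ) 1, 32*ε) +
      ∫ x in Set.Ioc (-1:ℝ) 1, Set.indicator (Set.Icc (-(2*ε)) (2*ε)) (fun _ => (32:ℝ)) x := by
    exact integral_add ((integrableOn_const_iff).mpr (Or.inr (by simp))) hindint
  rw [hsplit]
  have hc : (∫ _x in Set.Ioc (-1:ℝ) 1, (32*ε : ℝ)) = 64 * ε := by
    rw [setIntegral_const]
    rw [measureReal_def, Real.volume_Ioc]
    norm_num
    ring
  have hind : (∫ x in Set.Ioc (-1:ℝ) 1,
      Set.indicator (Set.Icc (-(2*ε)) (2*ε)) (fun _ => (32:ℝ)) x) ≤ 128 * ε := by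
    rw [setIntegral_indicator measurableSet_Icc, setIntegral_const, smul_eq_mul, measureReal_def]
    have hsub : Set.Ioc (-1:ℝ) 1 ∩ Set.Icc (-(2*ε)) (2*ε) ⊆ Set.Icc (-(2*ε)) (2*ε) :=
      Set.inter_subset_right
    have hle : (volume (Set.Ioc (-1:ℝ) 1 ∩ Set.Icc (-(2*ε)) (2*ε))).toReal ≤ 4 * ε := by
      have h1' : volume (Set.Ioc (-1:ℝ) 1 ∩ Set.Icc (-(2*ε)) (2*ε)) ≤
          volume (Set.Icc (-(2*ε)) (2*ε)) := measure_mono hsub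
      have h2' : volume (Set.Icc (-(2*ε)) (2*ε)) = ENNReal.ofReal (4*ε) := by
        rw [Real.volume_Icc]; ring_nf
      calc (volume (Set.Ioc (-1:ℝ) 1 ∩ Set.Icc (-(2*ε)) (2*ε))).toReal
          ≤ (volume (Set.Icc (-(2*ε)) (2*ε))).toReal := by
            apply ENNReal.toReal_mono
            · rw [h2']; exact ENNReal.ofReal_ne_top
            · exact h1'
        _ = 4 * ε := by rw [h2', ENNReal.toReal_ofReal (by positivity)]
    nlinarith [(volume (Set.Ioc (-1:ℝ) 1 ∩ Set.Icc (-(2*ε)) (2*ε))).toReal, hle]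
  nlinarith
end

section
/- For C¹ solutions with ρ > 0, the gradient variable v = ρ⁻¹ S_x satisfies the linear transport equation v_t + R v_x = (c'/(2c))[(2cρ⁻¹ + S)v − Rw] + ((c''c − c'²)/(4c²))ρ⁻¹(S² − R²), where w = ρ⁻¹ R_x. -/
lemma slice1 {F : Type*} [NormedAddCommGroup F] [NormedSpace ℝ F] (f : ℝ × ℝ → F)
    (x t : ℝ) (hf : DifferentiableAt ℝ f (x, t)) :
    HasDerivAt (fun y => f (y, t)) (fderiv ℝ f (x, t) (1, 0)) x :=
  hf.hasFDerivAt.comp_hasDerivAt x ((hasDerivAt_id x).prodMk (hasDerivAt_const x t))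

lemma slice2 {F : Type*} [NormedAddCommGroup F] [NormedSpace ℝ F] (f : ℝ × ℝ → F)
    (x t : ℝ) (hf : DifferentiableAt ℝ f (x, t)) :
    HasDerivAt (fun s => f (x, s)) (fderiv ℝ f (x, t) (0, 1)) t :=
  hf.hasFDerivAt.comp_hasDerivAt t ((hasDerivAt_const t x).prodMk (hasDerivAt_id t))

set_option maxHeartbeats 2000000 in
/-- For C² solutions with ρ > 0, the gradient variable v = ρ⁻¹S_x satisfies
v_t + R v_x = (c'/(2c))[(2cρ⁻¹ + S)v − Rw] + ((c''c − c'²)/(4c²))ρ⁻¹(S² − R²),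
where w = ρ⁻¹R_x. -/
theorem stmt19 (T : ℝ) (hT : 0 < T)
    (c c' c'' : ℝ → ℝ)
    (hcC2 : ContDiff ℝ 2 c)
    (hc : ∀ x, HasDerivAt c (c' x) x)
    (hc' : ∀ x, HasDerivAt c' (c'' x) x)
    (hcpos : ∀ x, 0 < c x)
    (ρ u ρx ρt ux ut Sx Rx vt vx : ℝ → ℝ → ℝ)
    (hρC2 : ContDiff ℝ 2 (fun p : ℝ × ℝ => ρ p.1 p.2))
    (huC2 : ContDiff ℝ 2 (fun p : ℝ × ℝ => u p.1 p.2))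
    (hρpos : ∀ x t, 0 < ρ x t)
    (hρx : ∀ x t, HasDerivAt (fun y => ρ y t) (ρx x t) x)
    (hρt : ∀ x t, HasDerivAt (fun s => ρ x s) (ρt x t) t)
    (hux : ∀ x t, HasDerivAt (fun y => u y t) (ux x t) x)
    (hut : ∀ x t, HasDerivAt (fun s => u x s) (ut x t) t)
    (hmass : ∀ x t, ρt x t + u x t * ρx x t + ρ x t * ux x t = 0)
    (hmom : ∀ x t,
      ut x t + u x t * ux x t + c x ^ 2 * (ρ x t)⁻¹ ^ 3 * ρx x t
        = c x * c' x * (ρ x t)⁻¹ ^ 2)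
    (hSx : ∀ x t, HasDerivAt (fun y => u y t + c y / ρ y t) (Sx x t) x)
    (hRx : ∀ x t, HasDerivAt (fun y => u y t - c y / ρ y t) (Rx x t) x)
    (hvt : ∀ x t, HasDerivAt (fun s => (ρ x s)⁻¹ * Sx x s) (vt x t) t)
    (hvx : ∀ x t, HasDerivAt (fun y => (ρ y t)⁻¹ * Sx y t) (vx x t) x) :
    ∀ x t,
      vt x t + (u x t - c x / ρ x t) * vx x t
        = c' x / (2 * c x) *
            ((2 * c x * (ρ x t)⁻¹ + (u x t + c x / ρ x t)) *
                ((ρ x t)⁻¹ * Sx x t)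
              - (u x t - c x / ρ x t) * ((ρ x t)⁻¹ * Rx x t))
          + (c'' x * c x - c' x ^ 2) / (4 * c x ^ 2) * (ρ x t)⁻¹ *
              ((u x t + c x / ρ x t) ^ 2 - (u x t - c x / ρ x t) ^ 2) := by
  intro x t
  have hρne : ∀ a b, ρ a b ≠ 0 := fun a b => (hρpos a b).ne'
  have hcne : ∀ a, c a ≠ 0 := fun a => (hcpos a).ne'
  have hS2 : ContDiff ℝ 2 (fun p : ℝ × ℝ => u p.1 p.2 + c p.1 / ρ p.1 p.2) :=
    huC2.add ((hcC2.comp contDiff_fst).div hρC2 fun p => hρne p.1 p.2)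
  have hSd : Differentiable ℝ (fun p : ℝ × ℝ => u p.1 p.2 + c p.1 / ρ p.1 p.2) :=
    hS2.differentiable two_ne_zero
  have hΦ : ContDiff ℝ 1 (fderiv ℝ (fun p : ℝ × ℝ => u p.1 p.2 + c p.1 / ρ p.1 p.2)) :=
    hS2.fderiv_right (by norm_num)
  have hΦd := hΦ.differentiable one_ne_zero
  -- identification of Sx with the directional fderiv
  have hSxF : ∀ a b, Sx a b
      = fderiv ℝ (fun p : ℝ × ℝ => u p.1 p.2 + c p.1 / ρ p.1 p.2) (a, b) ((1 : ℝ), (0 : ℝ)) :=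
    fun a b => (hSx a b).unique (slice1 _ a b (hSd _))
  -- explicit formulas
  have hSxval : ∀ a b, Sx a b
      = ux a b + (c' a * ρ a b - c a * ρx a b) / ρ a b ^ 2 :=
    fun a b => (hSx a b).unique ((hux a b).add ((hc a).div (hρx a b) (hρne a b)))
  have hRxval : ∀ a b, Rx a b
      = ux a b - (c' a * ρ a b - c a * ρx a b) / ρ a b ^ 2 :=
    fun a b => (hRx a b).unique ((hux a b).sub ((hc a).div (hρx a b) (hρne a b)))
  have hSTval : ∀ a b, fderiv ℝ (fun p : ℝ × ℝ => u p.1 p.2 + c p.1 / ρ p.1 p.2) (a, b)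
        ((0 : ℝ), (1 : ℝ))
      = ut a b + (0 * ρ a b - c a * ρt a b) / ρ a b ^ 2 :=
    fun a b => (slice2 _ a b (hSd _)).unique
      ((hut a b).add ((hasDerivAt_const b (c a)).div (hρt a b) (hρne a b)))
  -- characteristic equation for S
  have hchar : ∀ a b,
      fderiv ℝ (fun p : ℝ × ℝ => u p.1 p.2 + c p.1 / ρ p.1 p.2) (a, b) ((0 : ℝ), (1 : ℝ))
        + (u a b - c a / ρ a b) * Sx a b
      = c' a / (4 * c a) * ((u a b + c a / ρ a b) ^ 2 - (u a b - c a / ρ a b) ^ 2) := by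
    intro a b
    rw [hSTval, hSxval]
    have h1 := hmass a b
    have h2 := hmom a b
    have h2' : ut a b = c a * c' a * (ρ a b)⁻¹ ^ 2 - u a b * ux a b
        - c a ^ 2 * (ρ a b)⁻¹ ^ 3 * ρx a b := by linarith
    have h1' : ρt a b = -(u a b * ρx a b) - ρ a b * ux a b := by linarith
    rw [h2', h1']
    have hρ0 := hρne a b
    have hc0 := hcne a
    field_simp
    ring
  -- second derivative slices
  have hkey1 : ∀ v : ℝ × ℝ, HasDerivAt
      (fun y => fderiv ℝ (fun p : ℝ × ℝ => u p.1 p.2 + c p.1 / ρ p.1 p.2) (y, t) v)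
      (fderiv ℝ (fderiv ℝ (fun p : ℝ × ℝ => u p.1 p.2 + c p.1 / ρ p.1 p.2)) (x, t)
        ((1 : ℝ), (0 : ℝ)) v) x := by
    intro v
    have h := (slice1 (fderiv ℝ (fun p : ℝ × ℝ => u p.1 p.2 + c p.1 / ρ p.1 p.2)) x t
      (hΦd _)).clm_apply (hasDerivAt_const x v)
    simpa using h
  have hkey2 : ∀ v : ℝ × ℝ, HasDerivAt
      (fun s => fderiv ℝ (fun p : ℝ × ℝ => u p.1 p.2 + c p.1 / ρ p.1 p.2) (x, s) v)
      (fderiv ℝ (fderiv ℝ (fun p : ℝ × ℝ => u p.1 p.2 + c p.1 / ρ p.1 p.2)) (x, t)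
        ((0 : ℝ), (1 : ℝ)) v) t := by
    intro v
    have h := (slice2 (fderiv ℝ (fun p : ℝ × ℝ => u p.1 p.2 + c p.1 / ρ p.1 p.2)) x t
      (hΦd _)).clm_apply (hasDerivAt_const t v)
    simpa using h
  have hsym : ∀ v w : ℝ × ℝ,
      fderiv ℝ (fderiv ℝ (fun p : ℝ × ℝ => u p.1 p.2 + c p.1 / ρ p.1 p.2)) (x, t) v w
        = fderiv ℝ (fderiv ℝ (fun p : ℝ × ℝ => u p.1 p.2 + c p.1 / ρ p.1 p.2)) (x, t) w v :=
    second_derivative_symmetric (fun p => (hSd p).hasFDerivAt) (hΦd (x, t)).hasFDerivAt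
  -- abbreviations
  set X := fderiv ℝ (fun p : ℝ × ℝ => u p.1 p.2 + c p.1 / ρ p.1 p.2) (x, t) ((1:ℝ), (0:ℝ)) with hX
  set K := fderiv ℝ (fderiv ℝ (fun p : ℝ × ℝ => u p.1 p.2 + c p.1 / ρ p.1 p.2)) (x, t)
      ((1:ℝ), (0:ℝ)) ((1:ℝ), (0:ℝ)) with hK
  set M := fderiv ℝ (fderiv ℝ (fun p : ℝ × ℝ => u p.1 p.2 + c p.1 / ρ p.1 p.2)) (x, t)
      ((1:ℝ), (0:ℝ)) ((0:ℝ), (1:ℝ)) with hM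
  -- value of vt
  have hvtval : vt x t = -(ρt x t) / ρ x t ^ 2 * X + (ρ x t)⁻¹ * M := by
    have hfun : (fun s => (ρ x s)⁻¹ * Sx x s)
        = fun s => (ρ x s)⁻¹ *
            fderiv ℝ (fun p : ℝ × ℝ => u p.1 p.2 + c p.1 / ρ p.1 p.2) (x, s) ((1:ℝ), (0:ℝ)) :=
      funext fun s => by rw [hSxF x s]
    have h := ((hρt x t).inv (hρne x t)).mul (hkey2 ((1:ℝ), (0:ℝ)))
    simp only [Pi.inv_def, Pi.mul_def] at h
    rw [← hfun] at h
    have := (hvt x t).unique h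
    rw [this, hsym ((0:ℝ),(1:ℝ)) ((1:ℝ),(0:ℝ))]
  -- value of vx
  have hvxval : vx x t = -(ρx x t) / ρ x t ^ 2 * X + (ρ x t)⁻¹ * K := by
    have hfun : (fun y => (ρ y t)⁻¹ * Sx y t)
        = fun y => (ρ y t)⁻¹ *
            fderiv ℝ (fun p : ℝ × ℝ => u p.1 p.2 + c p.1 / ρ p.1 p.2) (y, t) ((1:ℝ), (0:ℝ)) :=
      funext fun y => by rw [hSxF y t]
    have h := ((hρx x t).inv (hρne x t)).mul (hkey1 ((1:ℝ), (0:ℝ)))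
    simp only [Pi.inv_def, Pi.mul_def] at h
    rw [← hfun] at h
    exact (hvx x t).unique h
  -- differentiate the characteristic equation in x
  have hdchar : M + (Rx x t * X + (u x t - c x / ρ x t) * K)
      = (c'' x * (4 * c x) - c' x * (0 * c x + 4 * c' x)) / (4 * c x) ^ 2 *
          ((u x t + c x / ρ x t) ^ 2 - (u x t - c x / ρ x t) ^ 2)
        + c' x / (4 * c x) *
          ((2 : ℕ) * (u x t + c x / ρ x t) ^ 1 * Sx x t
            - (2 : ℕ) * (u x t - c x / ρ x t) ^ 1 * Rx x t) := by
    have hL : HasDerivAt (fun y =>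
        fderiv ℝ (fun p : ℝ × ℝ => u p.1 p.2 + c p.1 / ρ p.1 p.2) (y, t) ((0:ℝ), (1:ℝ))
          + (u y t - c y / ρ y t) *
            fderiv ℝ (fun p : ℝ × ℝ => u p.1 p.2 + c p.1 / ρ p.1 p.2) (y, t) ((1:ℝ), (0:ℝ)))
        (M + (Rx x t * X + (u x t - c x / ρ x t) * K)) x := by
      have h := (hkey1 ((0:ℝ),(1:ℝ))).add ((hRx x t).mul (hkey1 ((1:ℝ),(0:ℝ))))
      simp only [← hX, ← hK, ← hM] at h
      exact h
    have hR : HasDerivAt (fun y =>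
        c' y / (4 * c y) * ((u y t + c y / ρ y t) ^ 2 - (u y t - c y / ρ y t) ^ 2))
        ((c'' x * (4 * c x) - c' x * (0 * c x + 4 * c' x)) / (4 * c x) ^ 2 *
          ((u x t + c x / ρ x t) ^ 2 - (u x t - c x / ρ x t) ^ 2)
        + c' x / (4 * c x) *
          ((2 : ℕ) * (u x t + c x / ρ x t) ^ 1 * Sx x t
            - (2 : ℕ) * (u x t - c x / ρ x t) ^ 1 * Rx x t)) x :=
      ((hc' x).div ((hasDerivAt_const x (4:ℝ)).mul (hc x))
        (mul_ne_zero four_ne_zero (hcne x))).mul (((hSx x t).pow 2).sub ((hRx x t).pow 2))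
    have hfun : (fun y =>
        fderiv ℝ (fun p : ℝ × ℝ => u p.1 p.2 + c p.1 / ρ p.1 p.2) (y, t) ((0:ℝ), (1:ℝ))
          + (u y t - c y / ρ y t) *
            fderiv ℝ (fun p : ℝ × ℝ => u p.1 p.2 + c p.1 / ρ p.1 p.2) (y, t) ((1:ℝ), (0:ℝ)))
        = fun y => c' y / (4 * c y) * ((u y t + c y / ρ y t) ^ 2 - (u y t - c y / ρ y t) ^ 2) :=
      funext fun y => by rw [← hSxF y t]; exact hchar y t
    rw [hfun] at hL
    exact hL.unique hR
  -- finish by algebra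
  push_cast at hdchar
  have hXS : X = Sx x t := (hSxF x t).symm
  have hM' : M = (c'' x * (4 * c x) - c' x * (0 * c x + 4 * c' x)) / (4 * c x) ^ 2 *
          ((u x t + c x / ρ x t) ^ 2 - (u x t - c x / ρ x t) ^ 2)
        + c' x / (4 * c x) *
          (2 * (u x t + c x / ρ x t) ^ 1 * Sx x t
            - 2 * (u x t - c x / ρ x t) ^ 1 * Rx x t)
        - (Rx x t * Sx x t + (u x t - c x / ρ x t) * K) := by
    rw [hXS] at hdchar
    linarith
  have h1' : ρt x t = -(u x t * ρx x t) - ρ x t * ux x t := by linarith [hmass x t]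
  rw [hvtval, hvxval, hXS, hM', hRxval x t, h1']
  have hρ0 := hρne x t
  have hc0 := hcne x
  field_simp
  ring
end
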